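/- (Theorem 2, global optimality.) Let Q* be the profile with Q*_i = Q_tot · (ψ_i/(Ψ + c_i)) / (Σ_{l=1}^N ψ_l/(Ψ + c_l)). Then the unique maximizer of S_{Q*} over F(Q*) is q = Q* itself, achieving S_{Q*}(Q*) = Σ_{i=1}^N ψ_i · log(1 + Ψ/c_i); moreover, for every strategy profile Q with all Q_i > 0 and every q ∈ F(Q), S_Q(q) ≤ Σ_{i=1}^N ψ_i · log(1 + Ψ/c_i), so the profile Q* achieves the global maximum of social welfare. -/

import Mathlib

open Finset

/-- Theorem 2, global optimality: for the profile
Q*_i = Q_tot·(ψ_i/(Ψ+c_i))/(Σ_l ψ_l/(Ψ+c_l)), the allocation q = Q* is feasible for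
F(Q*) and is the unique maximizer of S_{Q*} over F(Q*), achieving the value
Σ ψ_i log(1+Ψ/c_i); moreover for every positive profile Q and every q ∈ F(Q),
S_Q(q) ≤ Σ ψ_i log(1+Ψ/c_i), so Q* achieves the global maximum of social welfare. -/
theorem stmt_16 (N : ℕ) (hN : 1 ≤ N) (ψ c : Fin N → ℝ)
    (hψ : ∀ i, 0 < ψ i) (hc : ∀ i, 0 < c i)
    (Ψ Qtot : ℝ) (hΨ : 0 < Ψ) (hQtot : 0 < Qtot)
    (Qs : Fin N → ℝ)
    (hQs : ∀ i, Qs i = Qtot * (ψ i / (Ψ + c i)) / ∑ l, ψ l / (Ψ + c l)) :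
    ((∀ i, 0 ≤ Qs i ∧ Qs i ≤ Qs i) ∧ ∑ i, Qs i ≤ Qtot) ∧
    (∀ q : Fin N → ℝ, ((∀ i, 0 ≤ q i ∧ q i ≤ Qs i) ∧ ∑ i, q i ≤ Qtot) →
      ∑ i, ψ i * Real.log (1 + Ψ * q i / (c i * Qs i)) ≤
        ∑ i, ψ i * Real.log (1 + Ψ * Qs i / (c i * Qs i)) ∧
      (∑ i, ψ i * Real.log (1 + Ψ * q i / (c i * Qs i)) =
        ∑ i, ψ i * Real.log (1 + Ψ * Qs i / (c i * Qs i)) → q = Qs)) ∧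
    (∑ i, ψ i * Real.log (1 + Ψ * Qs i / (c i * Qs i)) =
      ∑ i, ψ i * Real.log (1 + Ψ / c i)) ∧
    (∀ Q : Fin N → ℝ, (∀ i, 0 < Q i) →
      ∀ q : Fin N → ℝ, ((∀ i, 0 ≤ q i ∧ q i ≤ Q i) ∧ ∑ i, q i ≤ Qtot) →
        ∑ i, ψ i * Real.log (1 + Ψ * q i / (c i * Q i)) ≤
          ∑ i, ψ i * Real.log (1 + Ψ / c i)) := by
  have hS : 0 < ∑ l, ψ l / (Ψ + c l) := by
    apply Finset.sum_pos
    · intro l _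
      exact div_pos (hψ l) (by linarith [hc l])
    · exact Finset.univ_nonempty_iff.mpr (Fin.pos_iff_nonempty.mp (by omega))
  have hQspos : ∀ i, 0 < Qs i := by
    intro i
    rw [hQs i]
    exact div_pos (mul_pos hQtot (div_pos (hψ i) (by linarith [hc i]))) hS
  have hsum : ∑ i, Qs i = Qtot := by
    have : ∑ i, Qs i = (Qtot / (∑ l, ψ l / (Ψ + c l))) * ∑ i, ψ i / (Ψ + c i) := by
      rw [Finset.mul_sum]
      exact Finset.sum_congr rfl fun i _ => by rw [hQs i]; ring
    rw [this, div_mul_cancel₀ _ (ne_of_gt hS)]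
  -- for positive bound Q i and 0 ≤ q i ≤ Q i, terms compare
  have key : ∀ (Qi qi ci : ℝ), 0 < Qi → 0 < ci → 0 ≤ qi → qi ≤ Qi →
      Real.log (1 + Ψ * qi / (ci * Qi)) ≤ Real.log (1 + Ψ / ci) := by
    intro Qi qi ci hQi hci hq hqQ
    apply Real.log_le_log (by positivity)
    have : Ψ * qi / (ci * Qi) ≤ Ψ / ci := by
      rw [div_le_div_iff₀ (by positivity) hci]
      have : Ψ * qi ≤ Ψ * Qi := by nlinarith
      nlinarith
    linarith
  have hval : ∑ i, ψ i * Real.log (1 + Ψ * Qs i / (c i * Qs i)) =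
      ∑ i, ψ i * Real.log (1 + Ψ / c i) := by
    apply Finset.sum_congr rfl
    intro i _
    congr 2
    rw [mul_comm (c i) (Qs i), mul_comm Ψ (Qs i), mul_div_mul_left _ _ (ne_of_gt (hQspos i))]
  refine ⟨⟨fun i => ⟨(hQspos i).le, le_refl _⟩, hsum.le⟩, ?_, hval, ?_⟩
  · intro q ⟨hq, _⟩
    have termle : ∀ i ∈ Finset.univ, ψ i * Real.log (1 + Ψ * q i / (c i * Qs i)) ≤
        ψ i * Real.log (1 + Ψ * Qs i / (c i * Qs i)) := by
      intro i _
      apply mul_le_mul_of_nonneg_left _ (hψ i).le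
      apply Real.log_le_log
      · have h0 := (hq i).1
        have h1 := hQspos i
        have h2 := hc i
        positivity
      · have h := (hq i).2
        have h0 := (hq i).1
        have h1 := hQspos i
        have h2 := hc i
        gcongr
    constructor
    · exact Finset.sum_le_sum termle
    · intro heq
      have := (Finset.sum_eq_sum_iff_of_le termle).mp heq
      funext i
      have hi := this i (Finset.mem_univ i)
      have h1 : Real.log (1 + Ψ * q i / (c i * Qs i)) =
          Real.log (1 + Ψ * Qs i / (c i * Qs i)) :=
        mul_left_cancel₀ (ne_of_gt (hψ i)) hi
      have hq0 := (hq i).1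
      have hQ0 := hQspos i
      have hc0 := hc i
      have hpos1 : (0:ℝ) < 1 + Ψ * q i / (c i * Qs i) := by positivity
      have hpos2 : (0:ℝ) < 1 + Ψ * Qs i / (c i * Qs i) := by positivity
      have h2 : 1 + Ψ * q i / (c i * Qs i) = 1 + Ψ * Qs i / (c i * Qs i) :=
        Real.log_injOn_pos (Set.mem_Ioi.mpr hpos1) (Set.mem_Ioi.mpr hpos2) h1
      have h3 : Ψ * q i / (c i * Qs i) = Ψ * Qs i / (c i * Qs i) := by linarith
      have hne : (c i * Qs i) ≠ 0 := by positivity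
      field_simp at h3
      exact h3
  · intro Q hQ q ⟨hq, _⟩
    apply Finset.sum_le_sum
    intro i _
    exact mul_le_mul_of_nonneg_left (key (Q i) (q i) (c i) (hQ i) (hc i) (hq i).1 (hq i).2)
      (hψ i).le
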